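/- Let r_1, r_2 be relatively prime positive integers, both at least 2. Then exactly half of the integers in the set {1, 2, ..., (r_1−1)(r_2−1)} are representable as p_1·r_1 + p_2·r_2 with p_1, p_2 non-negative integers; that is, the number of representable integers in this range equals (r_1−1)(r_2−1)/2. -/

import Mathlib

open Nat

/-- For coprime `r₁, r₂ ≥ 2`, exactly half of the integers in
`{1, …, (r₁−1)(r₂−1)}` are representable as `p₁·r₁ + p₂·r₂` with `p₁, p₂ ∈ ℕ`. -/
theorem stmt_3 (r₁ r₂ : ℕ) (h1 : 2 ≤ r₁) (h2 : 2 ≤ r₂) (hcop : Nat.Coprime r₁ r₂) :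
    2 * Set.ncard {d : ℕ | 1 ≤ d ∧ d ≤ (r₁ - 1) * (r₂ - 1) ∧
        ∃ p₁ p₂ : ℕ, d = p₁ * r₁ + p₂ * r₂} = (r₁ - 1) * (r₂ - 1) := by
  classical
  set F := r₁ * r₂ - r₁ - r₂ with hF
  have hmn : r₁ + r₂ ≤ r₁ * r₂ := Nat.add_le_mul h1 h2
  have hFval : (r₁ - 1) * (r₂ - 1) = F + 1 := by
    have h1' : 1 ≤ r₁ := by omega
    have h2' : 1 ≤ r₂ := by omega
    rw [hF, Nat.sub_sub]
    zify [h1', h2', hmn]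
    ring
  set rep : ℕ → Prop := fun d => ∃ p₁ p₂ : ℕ, d = p₁ * r₁ + p₂ * r₂ with hrep
  have hrep_iff : ∀ k, rep k ↔ k ∈ AddSubmonoid.closure ({r₁, r₂} : Set ℕ) := by
    intro k
    rw [AddSubmonoid.mem_closure_pair]
    constructor
    · rintro ⟨a, b, rfl⟩; exact ⟨a, b, by simp [smul_eq_mul]⟩
    · rintro ⟨a, b, h⟩; exact ⟨a, b, by simpa [smul_eq_mul] using h.symm⟩
  have hFrob := frobeniusNumber_pair hcop (by omega) (by omega)
  have hFnotrep : ¬ rep F := fun h => hFrob.1 ((hrep_iff F).mp h)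
  have hrep_gt : ∀ k, F < k → rep k := by
    intro k hk
    by_contra h
    exact absurd (hFrob.2 ((hrep_iff k).not.mp h)) (by omega)
  have hrep0 : rep 0 := ⟨0, 0, by simp⟩
  -- forward symmetry
  have hfwd : ∀ d, d ≤ F → rep d → ¬ rep (F - d) := by
    rintro d hd ⟨p₁, p₂, hp⟩ ⟨q₁, q₂, hq⟩
    apply hFnotrep
    exact ⟨p₁ + q₁, p₂ + q₂, by rw [add_mul, add_mul]; omega⟩
  -- backward symmetry
  have hbwd : ∀ d, d ≤ F → ¬ rep d → rep (F - d) := by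
    intro d hd hnd
    set x := Nat.chineseRemainder hcop 0 d with hxdef
    obtain ⟨q, hq⟩ := (Nat.modEq_zero_iff_dvd.mp x.2.1)
    have hx : x.val < r₁ * r₂ :=
      Nat.chineseRemainder_lt_mul hcop 0 d (by omega) (by omega)
    have hxd : d < x.val := by
      by_contra hle
      push_neg at hle
      obtain ⟨b, hb⟩ := (Nat.modEq_iff_dvd' hle).mp x.2.2
      exact hnd ⟨q, b, by rw [mul_comm q r₁, mul_comm b r₂]; omega⟩
    obtain ⟨t, ht⟩ := (Nat.modEq_iff_dvd' hxd.le).mp x.2.2.symm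
    have ht1 : 1 ≤ t := by
      rcases Nat.eq_zero_or_pos t with rfl | h
      · simp at ht; omega
      · exact h
    have hq2 : q < r₂ := by
      by_contra hle
      push_neg at hle
      have : r₁ * r₂ ≤ r₁ * q := Nat.mul_le_mul_left _ hle
      omega
    refine ⟨r₂ - 1 - q, t - 1, ?_⟩
    have e1 : (r₂ - 1 - q) * r₁ = r₁ * r₂ - r₁ - r₁ * q := by
      rw [Nat.sub_mul, Nat.sub_mul, one_mul, mul_comm r₂ r₁, mul_comm q r₁]
    have e2 : (t - 1) * r₂ = r₂ * t - r₂ := by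
      rw [Nat.sub_mul, one_mul, mul_comm t r₂]
    have hmarg : x.val + r₁ ≤ r₁ * r₂ := by
      have := Nat.mul_le_mul_left r₁ (show q + 1 ≤ r₂ by omega)
      rw [mul_add, mul_one] at this
      omega
    have hge : r₂ ≤ r₂ * t := Nat.le_mul_of_pos_right _ (by omega)
    omega
  -- counting
  set A := (Finset.Icc 1 (F + 1)).filter rep with hA
  set B := (Finset.range (F + 1)).filter rep with hB
  set C := (Finset.range (F + 2)).filter rep with hC
  have hsetA : {d : ℕ | 1 ≤ d ∧ d ≤ (r₁ - 1) * (r₂ - 1) ∧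
      ∃ p₁ p₂ : ℕ, d = p₁ * r₁ + p₂ * r₂} = ↑A := by
    ext d
    simp only [hA, Finset.coe_filter, Finset.mem_Icc, Set.mem_setOf_eq, hFval, hrep]
    tauto
  have hCA : C.card = A.card + 1 := by
    have : Finset.range (F + 2) = insert 0 (Finset.Icc 1 (F + 1)) := by
      ext d; simp [Finset.mem_range, Finset.mem_Icc]; omega
    rw [hC, this, Finset.filter_insert, if_pos hrep0, hA,
      Finset.card_insert_of_notMem (by simp)]
  have hCB : C.card = B.card + 1 := by
    have : Finset.range (F + 2) = insert (F + 1) (Finset.range (F + 1)) := by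
      ext d; simp [Finset.mem_range]; omega
    rw [hC, this, Finset.filter_insert, if_pos (hrep_gt _ (by omega)), hB,
      Finset.card_insert_of_notMem (by simp)]
  have hBneg : B.card = ((Finset.range (F + 1)).filter (fun d => ¬ rep d)).card := by
    apply Finset.card_nbij' (fun d => F - d) (fun d => F - d)
    · intro a ha
      simp only [hB, Finset.mem_coe, Finset.mem_filter, Finset.mem_range] at ha ⊢
      exact ⟨by omega, hfwd a (by omega) ha.2⟩
    · intro a ha
      simp only [hB, Finset.mem_coe, Finset.mem_filter, Finset.mem_range] at ha ⊢
      exact ⟨by omega, hbwd a (by omega) ha.2⟩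
    · intro a ha
      simp only [hB, Finset.mem_coe, Finset.mem_filter, Finset.mem_range] at ha
      show F - (F - a) = a
      exact Nat.sub_sub_self (by omega)
    · intro a ha
      simp only [hB, Finset.mem_coe, Finset.mem_filter, Finset.mem_range] at ha
      show F - (F - a) = a
      exact Nat.sub_sub_self (by omega)
  have hsum : B.card + ((Finset.range (F + 1)).filter (fun d => ¬ rep d)).card = F + 1 := by
    rw [hB, Finset.card_filter_add_card_filter_not, Finset.card_range]
  rw [hsetA, Set.ncard_coe_finset, hFval]
  omega
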